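/- Let S be a nonempty set, d a pseudometric on S such that (S,d) is totally bounded, and let φ: ℓ^∞(S) → ℝ be the supremum functional φ(f) = sup_{x∈S} f(x). Then φ is Hadamard directionally differentiable at every uniformly d-continuous f, with derivative φ'_f(g) = sup{g(x) : x ∈ S̄, f(x) = φ(f)} for uniformly d-continuous g, where S̄ is the completion of S with respect to d and f, g denote the unique continuous extensions to S̄. -/
import Mathlib


open Filter Topology

/-- Hadamard directional differentiability of the supremum functional on a
totally bounded pseudometric space: for uniformly continuous f and g and perturbations
gₙ → g uniformly, (sup(f + tₙ gₙ) − sup f)/tₙ → sup of the extension of g over the argmax set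
of the extension of f on the completion. -/
theorem stmt18 {S : Type*} [PseudoMetricSpace S] [Nonempty S]
    (hS : TotallyBounded (Set.univ : Set S))
    (f g : S → ℝ) (hf : UniformContinuous f) (hg : UniformContinuous g)
    (hfb : BddAbove (Set.range f))
    (t : ℕ → ℝ) (ht : ∀ n, 0 < t n) (ht0 : Tendsto t atTop (𝓝 0))
    (gs : ℕ → S → ℝ)
    (hgs : ∀ ε : ℝ, 0 < ε → ∀ᶠ n in atTop, ∀ x, |gs n x - g x| ≤ ε) :
    Tendsto (fun n => ((⨆ x, (f x + t n * gs n x)) - ⨆ x, f x) / t n) atTop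
      (𝓝 (sSup {r | ∃ x : UniformSpace.Completion S,
        UniformSpace.Completion.extension f x = (⨆ z, f z) ∧
        r = UniformSpace.Completion.extension g x})) := by
  classical
  set M : ℝ := ⨆ x, f x with hM
  -- completion is compact
  haveI : Nonempty (UniformSpace.Completion S) := ⟨((Classical.arbitrary S : S) : _)⟩
  haveI hcs : CompactSpace (UniformSpace.Completion S) := by
    constructor
    rw [isCompact_iff_totallyBounded_isComplete]
    refine ⟨?_, completeSpace_iff_isComplete_univ.mp inferInstance⟩
    have h1 : TotallyBounded (Set.range ((↑) : S → UniformSpace.Completion S)) := by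
      simpa [Set.image_univ] using hS.image (UniformSpace.Completion.uniformContinuous_coe S)
    have h2 := h1.closure
    rwa [UniformSpace.Completion.denseRange_coe.closure_range] at h2
  set F : UniformSpace.Completion S → ℝ := UniformSpace.Completion.extension f with hF
  set G : UniformSpace.Completion S → ℝ := UniformSpace.Completion.extension g with hG
  have hFc : Continuous F := UniformSpace.Completion.continuous_extension
  have hGc : Continuous G := UniformSpace.Completion.continuous_extension
  have hFcoe : ∀ x : S, F x = f x := fun x => UniformSpace.Completion.extension_coe hf x
  have hGcoe : ∀ x : S, G x = g x := fun x => UniformSpace.Completion.extension_coe hg x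
  have hfleM : ∀ x : S, f x ≤ M := fun x => le_ciSup hfb x
  -- F ≤ M on the completion
  have hFleM : ∀ y, F y ≤ M := by
    have hcl : IsClosed {y : UniformSpace.Completion S | F y ≤ M} :=
      isClosed_le hFc continuous_const
    exact isClosed_property UniformSpace.Completion.denseRange_coe hcl
      (fun a => by simpa [hFcoe a] using hfleM a)
  -- argmax point
  obtain ⟨x₀, -, hx₀'⟩ := isCompact_univ.exists_isMaxOn Set.univ_nonempty hFc.continuousOn
  have hx₀ : ∀ y, F y ≤ F x₀ := fun y => hx₀' (Set.mem_univ y)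
  have hx₀M : F x₀ = M := by
    refine le_antisymm (hFleM x₀) (ciSup_le fun s => ?_)
    simpa [hFcoe s] using hx₀ s
  -- maximizer of G over argmax set
  set A : Set (UniformSpace.Completion S) := {y | F y = M} with hA
  have hAcl : IsClosed A := isClosed_eq hFc continuous_const
  have hAcomp : IsCompact A := hAcl.isCompact
  obtain ⟨xs, hxsA, hxsmax⟩ := hAcomp.exists_isMaxOn ⟨x₀, hx₀M⟩ hGc.continuousOn
  set L : ℝ := G xs with hL
  have hmaxA : ∀ y ∈ A, G y ≤ L := fun y hy => hxsmax hy
  -- the sSup in the statement is L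
  have hsSup : sSup {r | ∃ x : UniformSpace.Completion S,
      UniformSpace.Completion.extension f x = M ∧
      r = UniformSpace.Completion.extension g x} = L := by
    apply le_antisymm
    · refine csSup_le ⟨L, ⟨xs, hxsA, rfl⟩⟩ ?_
      rintro r ⟨y, hy, rfl⟩
      exact hmaxA y hy
    · refine le_csSup ⟨L, ?_⟩ ⟨xs, hxsA, rfl⟩
      rintro r ⟨y, hy, rfl⟩
      exact hmaxA y hy
  -- bound for G
  obtain ⟨y₁, -, hy₁'⟩ := isCompact_univ.exists_isMaxOn Set.univ_nonempty (hGc.abs).continuousOn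
  have hy₁ : ∀ y, |G y| ≤ |G y₁| := fun y => hy₁' (Set.mem_univ y)
  set Cg : ℝ := |G y₁| with hCg
  have hCg0 : 0 ≤ Cg := abs_nonneg _
  have hgbdd : ∀ x : S, |g x| ≤ Cg := fun x => by simpa [hGcoe x] using hy₁ x
  have hLle : |L| ≤ Cg := hy₁ xs
  -- key upper bound lemma
  have keyB : ∀ ε : ℝ, 0 < ε → ∃ δ : ℝ, 0 < δ ∧ ∀ x : S, M - δ ≤ f x → g x ≤ L + ε := by
    intro ε hε
    by_contra hcon
    push_neg at hcon
    set Z : ℕ → Set (UniformSpace.Completion S) :=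
      fun n => {y | M - 1/(n+1) ≤ F y ∧ L + ε ≤ G y} with hZ
    have hZne : ∀ n, (Z n).Nonempty := by
      intro n
      obtain ⟨x, hx1, hx2⟩ := hcon (1/(n+1)) (by positivity)
      exact ⟨(x : UniformSpace.Completion S),
        by simpa [hZ, hFcoe x] using hx1, by simpa [hZ, hGcoe x] using hx2.le⟩
    have hZcl : ∀ n, IsClosed (Z n) := fun n =>
      (isClosed_le continuous_const hFc).inter (isClosed_le continuous_const hGc)
    have hZcomp : ∀ n, IsCompact (Z n) := fun n => (hZcl n).isCompact
    have hanti : Antitone Z := by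
      intro m n hmn y hy
      have h1 : (1:ℝ)/(n+1) ≤ 1/(m+1) := by
        apply one_div_le_one_div_of_le (by positivity)
        exact_mod_cast by omega
      exact ⟨le_trans (by linarith) hy.1, hy.2⟩
    obtain ⟨y, hy⟩ := IsCompact.nonempty_iInter_of_directed_nonempty_isCompact_isClosed
      Z hanti.directed_ge hZne hZcomp hZcl
    have hy' : ∀ n : ℕ, M - 1/(n+1) ≤ F y := fun n => (Set.mem_iInter.mp hy n).1
    have hyG : L + ε ≤ G y := (Set.mem_iInter.mp hy 0).2
    have hMy : M ≤ F y := by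
      have htend : Tendsto (fun n : ℕ => M - 1/(n+1)) atTop (𝓝 (M - 0)) :=
        tendsto_const_nhds.sub tendsto_one_div_add_atTop_nhds_zero_nat
      have := le_of_tendsto htend (Eventually.of_forall hy')
      simpa using this
    have hyA : y ∈ A := le_antisymm (hFleM y) hMy
    have := hmaxA y hyA
    linarith
  -- key lower bound lemma
  have keyC : ∀ ε : ℝ, 0 < ε → ∀ δ : ℝ, 0 < δ → ∃ x : S, M - δ < f x ∧ L - ε < g x := by
    intro ε hε δ hδ
    have hopen : IsOpen {y : UniformSpace.Completion S | M - δ < F y ∧ L - ε < G y} :=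
      (isOpen_lt continuous_const hFc).inter (isOpen_lt continuous_const hGc)
    have hne : {y : UniformSpace.Completion S | M - δ < F y ∧ L - ε < G y}.Nonempty := by
      refine ⟨xs, ?_, ?_⟩
      · have : F xs = M := hxsA
        linarith
      · linarith
    obtain ⟨x, hx⟩ := UniformSpace.Completion.denseRange_coe.exists_mem_open hopen hne
    exact ⟨x, by simpa [hFcoe x] using hx.1, by simpa [hGcoe x] using hx.2⟩
  -- reduce to an eventual bound
  have main : ∀ ε : ℝ, 0 < ε → ∀ᶠ n in atTop,
      |((⨆ x, (f x + t n * gs n x)) - M) / t n - L| ≤ ε := by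
    intro ε hε
    obtain ⟨δ, hδ, hB⟩ := keyB (ε/4) (by positivity)
    have hD : (0:ℝ) < Cg + |L| + 1 := by positivity
    have hev2 : ∀ᶠ n in atTop, t n < δ / (Cg + |L| + 1) :=
      ht0.eventually_lt_const (by positivity)
    filter_upwards [hgs (ε/4) (by positivity), hev2] with n hn1 hn2
    set τ := t n with hτdef
    have hτ : 0 < τ := ht n
    have hτD : τ * (Cg + |L| + 1) < δ := (lt_div_iff₀ hD).mp hn2
    -- bounds on gs
    have hgsub : ∀ x, gs n x ≤ g x + ε/4 := fun x => by
      have := abs_le.mp (hn1 x); linarith [this.2]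
    have hgslb : ∀ x, g x - ε/4 ≤ gs n x := fun x => by
      have := abs_le.mp (hn1 x); linarith [this.1]
    -- bddAbove of perturbed range
    have hbdd : BddAbove (Set.range fun x => f x + τ * gs n x) := by
      refine ⟨M + τ * (Cg + ε/4), ?_⟩
      rintro _ ⟨x, rfl⟩
      have h1 : gs n x ≤ Cg + ε/4 := by
        have := abs_le.mp (hgbdd x); linarith [hgsub x, this.2]
      have h2 : τ * gs n x ≤ τ * (Cg + ε/4) := mul_le_mul_of_nonneg_left h1 hτ.le
      have := hfleM x
      simp only []
      linarith
    -- upper bound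
    have hupper : (⨆ x, (f x + τ * gs n x)) ≤ M + τ * (L + ε/2) := by
      refine ciSup_le fun x => ?_
      rcases le_or_gt (M - δ) (f x) with hx | hx
      · have h1 : g x ≤ L + ε/4 := hB x hx
        have h2 : gs n x ≤ L + ε/2 := by linarith [hgsub x]
        have h3 : τ * gs n x ≤ τ * (L + ε/2) := mul_le_mul_of_nonneg_left h2 hτ.le
        linarith [hfleM x]
      · have h1 : gs n x ≤ Cg + ε/4 := by
          have := abs_le.mp (hgbdd x); linarith [hgsub x, this.2]
        have h2 : τ * gs n x ≤ τ * (Cg + ε/4) := mul_le_mul_of_nonneg_left h1 hτ.le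
        have h3 : Cg + ε/4 ≤ (Cg + |L| + 1) + (L + ε/2) := by
          have := neg_abs_le L; linarith
        have h4 : τ * (Cg + ε/4) ≤ τ * ((Cg + |L| + 1) + (L + ε/2)) :=
          mul_le_mul_of_nonneg_left h3 hτ.le
        have h5 : τ * ((Cg + |L| + 1) + (L + ε/2))
            = τ * (Cg + |L| + 1) + τ * (L + ε/2) := by ring
        linarith
    -- lower bound
    have hlower : M + τ * (L - 3*ε/4) ≤ ⨆ x, (f x + τ * gs n x) := by
      obtain ⟨x, hx1, hx2⟩ := keyC (ε/4) (by positivity) (ε/4 * τ) (by positivity)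
      have h1 : g x - ε/4 ≤ gs n x := hgslb x
      have h2 : τ * (L - ε/2) ≤ τ * gs n x := by
        refine mul_le_mul_of_nonneg_left ?_ hτ.le
        linarith
      have h3 : f x + τ * gs n x ≤ ⨆ x, (f x + τ * gs n x) := le_ciSup hbdd x
      have h4 : τ * (L - 3*ε/4) = τ * (L - ε/2) - ε/4 * τ := by ring
      linarith
    -- conclude
    have hdiv1 : L - 3*ε/4 ≤ ((⨆ x, (f x + τ * gs n x)) - M) / τ := by
      rw [le_div_iff₀ hτ]
      nlinarith [hlower]
    have hdiv2 : ((⨆ x, (f x + τ * gs n x)) - M) / τ ≤ L + ε/2 := by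
      rw [div_le_iff₀ hτ]
      nlinarith [hupper]
    exact abs_le.mpr ⟨by linarith, by linarith⟩
  rw [hsSup]
  rw [Metric.tendsto_atTop]
  intro ε hε
  obtain ⟨N, hN⟩ := (main (ε/2) (by positivity)).exists_forall_of_atTop
  exact ⟨N, fun n hn => by
    rw [Real.dist_eq]
    calc |((⨆ x, (f x + t n * gs n x)) - M) / t n - L| ≤ ε/2 := hN n hn
    _ < ε := by linarith⟩
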